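/- Rooted-tree DP correctness: let T be a tree rooted at r with edge weights, and for each vertex u, color b ∈ {0,1}, and integer q, let D_u^b[q] be the minimum over 2-colorings φ of the subtree T_u with φ(u) = b and |φ⁻¹(0) ∩ V(T_u)| = q of the maximum weight of a φ-monochromatic edge within T_u (with min over empty set = +∞ and max over no monochromatic edges = −∞). Then for an internal node u with children v₁,…,v_k, D_u^b[q] equals the minimum over child colors g₁,…,g_k ∈ {0,1} and nonnegative integers q₁+⋯+q_k = q − [b = 0] of max over i of max(D_{vᵢ}^{gᵢ}[qᵢ], [b = gᵢ]·w(u vᵢ)), where [P]·w means w if P holds and −∞ otherwise. -/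
import Mathlib


/-- `ancestorOf parent u x` : `u` is an ancestor of `x` (including `x` itself)
in the rooted tree given by the parent function. -/
def ancestorOf {V : Type*} (parent : V → V) (u x : V) : Prop :=
  ∃ k : ℕ, parent^[k] x = u

/-- Heaviest `φ`-monochromatic edge inside the subtree rooted at `u`, where the
edge above `x` (joining `x` to `parent x`) has weight `W x`; `⊥` if there is no
monochromatic edge. -/
noncomputable def maxMonoSub {V : Type*} (parent : V → V) (W : V → ℝ)
    (u : V) (φ : V → Fin 2) : EReal :=
  sSup {m : EReal | ∃ x, ancestorOf parent u x ∧ x ≠ u ∧ φ x = φ (parent x) ∧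
    m = (W x : EReal)}

/-- The DP table: `dpD parent W u b q` is the minimum, over 2-colorings `φ` of
the subtree rooted at `u` with `φ u = b` and exactly `q` subtree vertices of
color `0`, of the heaviest `φ`-monochromatic subtree edge (`⊤` if no such `φ`). -/
noncomputable def dpD {V : Type*} (parent : V → V) (W : V → ℝ)
    (u : V) (b : Fin 2) (q : ℕ) : EReal :=
  sInf {m : EReal | ∃ φ : V → Fin 2, φ u = b ∧
    Nat.card {x : V // ancestorOf parent u x ∧ φ x = 0} = q ∧
    m = maxMonoSub parent W u φ}

open scoped Classical

namespace Aux

variable {V : Type*} (parent : V → V)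

lemma anc_rfl (u : V) : ancestorOf parent u u := ⟨0, rfl⟩

lemma anc_trans {u x y : V} (h1 : ancestorOf parent u x) (h2 : ancestorOf parent x y) :
    ancestorOf parent u y := by
  obtain ⟨k, hk⟩ := h1; obtain ⟨l, hl⟩ := h2
  exact ⟨k + l, by rw [Function.iterate_add_apply, hl, hk]⟩

variable {r : V}

lemma eq_root_of_cycle (hroot : parent r = r) (hreach : ∀ v : V, ∃ k : ℕ, parent^[k] v = r)
    {u : V} {m : ℕ} (hm : m ≠ 0) (h : parent^[m] u = u) : u = r := by
  obtain ⟨k, hk⟩ := hreach u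
  have hiter : ∀ j : ℕ, parent^[j * m] u = u := by
    intro j
    induction j with
    | zero => simp
    | succ n ih => rw [Nat.succ_mul, Function.iterate_add_apply, h, ih]
  have hkm : k ≤ k * m := Nat.le_mul_of_pos_right k (Nat.pos_of_ne_zero hm)
  calc u = parent^[k * m] u := (hiter k).symm
    _ = parent^[(k * m - k) + k] u := by rw [Nat.sub_add_cancel hkm]
    _ = parent^[k * m - k] (parent^[k] u) := Function.iterate_add_apply _ _ _ _
    _ = r := by rw [hk, Function.iterate_fixed hroot]

lemma not_anc_child (hroot : parent r = r) (hreach : ∀ v : V, ∃ k : ℕ, parent^[k] v = r)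
    {u v : V} (hv : parent v = u) (hvu : v ≠ u) :
    ¬ ancestorOf parent v u := by
  rintro ⟨k, hk⟩
  have h1 : parent^[k + 1] u = u := by
    rw [Function.iterate_succ_apply', hk, hv]
  have hu := eq_root_of_cycle parent hroot hreach (Nat.succ_ne_zero k) h1
  subst hu
  rw [Function.iterate_fixed hroot] at hk
  exact hvu hk.symm

lemma exists_child {u x : V} (hx : ancestorOf parent u x) (hxu : x ≠ u) :
    ∃ v, parent v = u ∧ v ≠ u ∧ ancestorOf parent v x := by
  have h : ∃ k, parent^[k] x = u := hx
  have hk : parent^[Nat.find h] x = u := Nat.find_spec h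
  have hk0 : Nat.find h ≠ 0 := by
    intro h0
    apply hxu
    simpa [h0] using hk
  refine ⟨parent^[Nat.find h - 1] x, ?_, ?_, ⟨Nat.find h - 1, rfl⟩⟩
  · have he : Nat.find h - 1 + 1 = Nat.find h :=
      Nat.sub_add_cancel (Nat.pos_of_ne_zero hk0)
    calc parent (parent^[Nat.find h - 1] x) = parent^[Nat.find h - 1 + 1] x :=
          (Function.iterate_succ_apply' _ _ _).symm
      _ = u := by rw [he]; exact hk
  · intro hvu
    exact Nat.find_min h (Nat.sub_lt (Nat.pos_of_ne_zero hk0) one_pos) hvu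

lemma child_unique (hroot : parent r = r) (hreach : ∀ v : V, ∃ k : ℕ, parent^[k] v = r)
    {u v v' x : V} (hv : parent v = u) (hvu : v ≠ u)
    (hv' : parent v' = u) (hv'u : v' ≠ u)
    (hxv : ancestorOf parent v x) (hxv' : ancestorOf parent v' x) : v = v' := by
  obtain ⟨j, hj⟩ := hxv
  obtain ⟨j', hj'⟩ := hxv'
  have key : ∀ (a b : V) (i i' : ℕ), parent a = u → a ≠ u → parent b = u → b ≠ u →
      parent^[i] x = a → parent^[i'] x = b → i ≤ i' → a = b := by
    intro a b i i' ha hau hb hbu hi hi' hle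
    have h1 : parent^[i' - i] a = b := by
      rw [← hi, ← Function.iterate_add_apply, Nat.sub_add_cancel hle, hi']
    rcases Nat.eq_zero_or_pos (i' - i) with h0 | hpos
    · rw [h0] at h1; simpa using h1
    · exfalso
      apply not_anc_child parent hroot hreach hb hbu
      have hs : i' - i = (i' - i - 1) + 1 := (Nat.succ_pred_eq_of_pos hpos).symm
      rw [hs, Function.iterate_succ_apply, ha] at h1
      exact ⟨i' - i - 1, h1⟩
  rcases le_total j j' with h | h
  · exact key v v' j j' hv hvu hv' hv'u hj hj' h
  · exact (key v' v j' j hv' hv'u hv hvu hj' hj h).symm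

lemma anc_of_child {u v x : V} (hv : parent v = u) (hx : ancestorOf parent v x) :
    ancestorOf parent u x :=
  anc_trans parent ⟨1, by simpa using hv⟩ hx

lemma anc_parent {v x : V} (hx : ancestorOf parent v x) (hxv : x ≠ v) :
    ancestorOf parent v (parent x) := by
  obtain ⟨k, hk⟩ := hx
  have hk0 : k ≠ 0 := by rintro rfl; exact hxv hk
  refine ⟨k - 1, ?_⟩
  rw [← Function.iterate_succ_apply, Nat.succ_eq_add_one,
    Nat.sub_add_cancel (Nat.pos_of_ne_zero hk0)]
  exact hk

lemma maxMono_congr (W : V → ℝ) {u : V} {φ ψ : V → Fin 2}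
    (h : ∀ x, ancestorOf parent u x → φ x = ψ x) :
    maxMonoSub parent W u φ = maxMonoSub parent W u ψ := by
  unfold maxMonoSub
  congr 1
  ext m
  constructor
  · rintro ⟨x, hx, hxu, hmono, rfl⟩
    exact ⟨x, hx, hxu, by
      rw [← h x hx, ← h (parent x) (anc_parent parent hx hxu)]; exact hmono, rfl⟩
  · rintro ⟨x, hx, hxu, hmono, rfl⟩
    exact ⟨x, hx, hxu, by
      rw [h x hx, h (parent x) (anc_parent parent hx hxu)]; exact hmono, rfl⟩

lemma maxMono_child_le (hroot : parent r = r) (hreach : ∀ v : V, ∃ k : ℕ, parent^[k] v = r)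
    (W : V → ℝ) (φ : V → Fin 2) {u v : V} (hv : parent v = u) (hvu : v ≠ u) :
    maxMonoSub parent W v φ ≤ maxMonoSub parent W u φ := by
  apply sSup_le_sSup
  rintro m ⟨x, hx, hxv, hmono, rfl⟩
  refine ⟨x, anc_of_child parent hv hx, ?_, hmono, rfl⟩
  rintro rfl
  exact not_anc_child parent hroot hreach hv hvu hx

lemma edge_le (W : V → ℝ) (φ : V → Fin 2) {u v : V} (hv : parent v = u) (hvu : v ≠ u)
    (hmono : φ v = φ u) : (W v : EReal) ≤ maxMonoSub parent W u φ :=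
  le_sSup ⟨v, ⟨1, by simpa using hv⟩, hvu, by rw [hv]; exact hmono, rfl⟩

lemma card_congr' {P Q : V → Prop} (h : ∀ x, P x ↔ Q x) :
    Nat.card {x // P x} = Nat.card {x // Q x} :=
  Nat.card_congr (Equiv.subtypeEquivRight h)

variable [Fintype V]

lemma card_eq_filter (P : V → Prop) [DecidablePred P] :
    Nat.card {x : V // P x} = (Finset.univ.filter P).card := by
  rw [Nat.card_eq_fintype_card, Fintype.card_subtype]

lemma finsum_children (u : V) (qf : V → ℕ) :
    (∑ᶠ v ∈ {v : V | parent v = u ∧ v ≠ u}, qf v) =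
      ∑ v ∈ Finset.univ.filter (fun v => parent v = u ∧ v ≠ u), qf v := by
  rw [← finsum_mem_coe_finset]
  congr 1
  ext v
  simp

lemma card_decomp (hroot : parent r = r) (hreach : ∀ v : V, ∃ k : ℕ, parent^[k] v = r)
    (u : V) (φ : V → Fin 2) :
    Nat.card {x : V // ancestorOf parent u x ∧ φ x = 0} =
      (if φ u = 0 then 1 else 0) +
        ∑ v ∈ Finset.univ.filter (fun v => parent v = u ∧ v ≠ u),
          Nat.card {x : V // ancestorOf parent v x ∧ φ x = 0} := by
  rw [card_eq_filter]
  have hpair : ∀ v ∈ Finset.univ.filter (fun v => parent v = u ∧ v ≠ u),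
      ∀ v' ∈ Finset.univ.filter (fun v => parent v = u ∧ v ≠ u), v ≠ v' →
      Disjoint (Finset.univ.filter (fun x => ancestorOf parent v x ∧ φ x = 0))
        (Finset.univ.filter (fun x => ancestorOf parent v' x ∧ φ x = 0)) := by
    intro v hv v' hv' hne
    simp only [Finset.mem_filter, Finset.mem_univ, true_and] at hv hv'
    rw [Finset.disjoint_left]
    intro x hx hx'
    simp only [Finset.mem_filter, Finset.mem_univ, true_and] at hx hx'
    exact hne (child_unique parent hroot hreach hv.1 hv.2 hv'.1 hv'.2 hx.1 hx'.1)
  have hdisj : Disjoint (if φ u = 0 then ({u} : Finset V) else ∅)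
      ((Finset.univ.filter (fun v => parent v = u ∧ v ≠ u)).biUnion
        (fun v => Finset.univ.filter (fun x => ancestorOf parent v x ∧ φ x = 0))) := by
    rw [Finset.disjoint_left]
    intro x hx hx'
    simp only [Finset.mem_biUnion, Finset.mem_filter, Finset.mem_univ, true_and] at hx'
    obtain ⟨v, ⟨hv, hvu⟩, hxv, _⟩ := hx'
    have hxu : x = u := by
      by_cases h0 : φ u = 0
      · simpa [h0] using hx
      · simp [h0] at hx
    subst hxu
    exact not_anc_child parent hroot hreach hv hvu hxv
  have hsplit : Finset.univ.filter (fun x => ancestorOf parent u x ∧ φ x = 0) =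
      (if φ u = 0 then {u} else ∅) ∪
        (Finset.univ.filter (fun v => parent v = u ∧ v ≠ u)).biUnion
          (fun v => Finset.univ.filter (fun x => ancestorOf parent v x ∧ φ x = 0)) := by
    ext x
    simp only [Finset.mem_filter, Finset.mem_univ, true_and, Finset.mem_union,
      Finset.mem_biUnion]
    constructor
    · rintro ⟨hanc, h0⟩
      by_cases hxu : x = u
      · subst hxu
        left
        simp [h0]
      · right
        obtain ⟨v, hv, hvu, hxv⟩ := exists_child parent hanc hxu
        exact ⟨v, ⟨hv, hvu⟩, hxv, h0⟩
    · rintro (hx | ⟨v, ⟨hv, hvu⟩, hxv, h0⟩)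
      · by_cases hu0 : φ u = 0
        · simp only [if_pos hu0, Finset.mem_singleton] at hx
          rw [hx]
          exact ⟨anc_rfl parent u, hu0⟩
        · simp [hu0] at hx
      · exact ⟨anc_of_child parent hv hxv, h0⟩
  rw [hsplit, Finset.card_union_of_disjoint hdisj, Finset.card_biUnion hpair]
  congr 1
  · split <;> simp
  · apply Finset.sum_congr rfl
    intro v _
    exact (card_eq_filter _).symm

lemma dpD_attained (W : V → ℝ) (u : V) (b : Fin 2) (q : ℕ)
    (hne : {m : EReal | ∃ φ : V → Fin 2, φ u = b ∧
        Nat.card {x : V // ancestorOf parent u x ∧ φ x = 0} = q ∧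
        m = maxMonoSub parent W u φ}.Nonempty) :
    ∃ φ : V → Fin 2, φ u = b ∧
      Nat.card {x : V // ancestorOf parent u x ∧ φ x = 0} = q ∧
      maxMonoSub parent W u φ = dpD parent W u b q := by
  have hfin : {m : EReal | ∃ φ : V → Fin 2, φ u = b ∧
      Nat.card {x : V // ancestorOf parent u x ∧ φ x = 0} = q ∧
      m = maxMonoSub parent W u φ}.Finite := by
    apply (Set.finite_range (maxMonoSub parent W u)).subset
    rintro m ⟨φ, -, -, rfl⟩
    exact ⟨φ, rfl⟩
  obtain ⟨φ, h1, h2, h3⟩ := hne.csInf_mem hfin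
  exact ⟨φ, h1, h2, h3.symm⟩

end Aux

/-- Correctness of the tree-DP recurrence: at an internal node `u`, the table
entry `D_u^b[q]` equals the minimum over child colors `g` and cardinality
splits `qf` (with `[b = 0] + Σ_v qf v = q`) of the maximum over children `v` of
`max (D_v^{g v}[qf v]) ([b = g v]·W v)`; consequently
`M*(c) = min (D_r^0[c]) (D_r^1[c])`. -/
theorem stmt_19 {V : Type*} [Fintype V] (parent : V → V) (r : V)
    (hroot : parent r = r) (hreach : ∀ v : V, ∃ k : ℕ, parent^[k] v = r)
    (W : V → ℝ) :
    (∀ u : V, (∃ v, parent v = u ∧ v ≠ u) → ∀ (b : Fin 2) (q : ℕ),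
      dpD parent W u b q =
        sInf {m : EReal | ∃ (g : V → Fin 2) (qf : V → ℕ),
          (if b = 0 then 1 else 0) + (∑ᶠ v ∈ {v | parent v = u ∧ v ≠ u}, qf v) = q ∧
          m = sSup {t : EReal | ∃ v, parent v = u ∧ v ≠ u ∧
            t = max (dpD parent W v (g v) (qf v))
              (if b = g v then (W v : EReal) else ⊥)}}) ∧
    ∀ c : ℕ,
      sInf {m : EReal | ∃ φ : V → Fin 2,
          Nat.card {x : V // φ x = 0} = c ∧ m = maxMonoSub parent W r φ} =
        min (dpD parent W r 0 c) (dpD parent W r 1 c) := by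
  classical
  constructor
  · intro u _ b q
    apply le_antisymm
    · -- dpD ≤ RHS
      apply le_sInf
      rintro m ⟨g, qf, hcount, rfl⟩
      by_cases hall : ∀ v : V, (parent v = u ∧ v ≠ u) →
          ({m : EReal | ∃ φ : V → Fin 2, φ v = g v ∧
            Nat.card {x : V // ancestorOf parent v x ∧ φ x = 0} = qf v ∧
            m = maxMonoSub parent W v φ}).Nonempty
      · have key : ∀ v : V, ∃ φv : V → Fin 2, (parent v = u ∧ v ≠ u) →
            φv v = g v ∧ Nat.card {x : V // ancestorOf parent v x ∧ φv x = 0} = qf v ∧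
              maxMonoSub parent W v φv = dpD parent W v (g v) (qf v) := by
          intro v
          by_cases hv : parent v = u ∧ v ≠ u
          · obtain ⟨φv, h1, h2, h3⟩ := Aux.dpD_attained parent W v (g v) (qf v) (hall v hv)
            exact ⟨φv, fun _ => ⟨h1, h2, h3⟩⟩
          · exact ⟨fun _ => 0, fun h => absurd h hv⟩
        choose Φ hΦ using key
        set φ : V → Fin 2 := fun x =>
          if h : ∃ v, (parent v = u ∧ v ≠ u) ∧ ancestorOf parent v x
          then Φ h.choose x else b with hφdef
        have hagree : ∀ v, (parent v = u ∧ v ≠ u) → ∀ x, ancestorOf parent v x →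
            φ x = Φ v x := by
          intro v hv x hx
          have hex : ∃ v', (parent v' = u ∧ v' ≠ u) ∧ ancestorOf parent v' x := ⟨v, hv, hx⟩
          have heq : hex.choose = v :=
            Aux.child_unique parent hroot hreach hex.choose_spec.1.1 hex.choose_spec.1.2
              hv.1 hv.2 hex.choose_spec.2 hx
          rw [hφdef]
          simp only
          rw [dif_pos hex, heq]
        have hφu : φ u = b := by
          have hnot : ¬ ∃ v, (parent v = u ∧ v ≠ u) ∧ ancestorOf parent v u := by
            rintro ⟨v, hv, hanc⟩
            exact Aux.not_anc_child parent hroot hreach hv.1 hv.2 hanc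
          rw [hφdef]
          simp only
          rw [dif_neg hnot]
        have hcard : Nat.card {x : V // ancestorOf parent u x ∧ φ x = 0} = q := by
          rw [Aux.card_decomp parent hroot hreach u φ, hφu]
          rw [← hcount, Aux.finsum_children]
          congr 1
          apply Finset.sum_congr rfl
          intro v hv
          simp only [Finset.mem_filter, Finset.mem_univ, true_and] at hv
          rw [Aux.card_congr' (Q := fun x => ancestorOf parent v x ∧ Φ v x = 0)
            (fun x => ?_)]
          · exact (hΦ v hv).2.1
          · constructor
            · rintro ⟨hx, h0⟩; exact ⟨hx, by rw [← hagree v hv x hx]; exact h0⟩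
            · rintro ⟨hx, h0⟩; exact ⟨hx, by rw [hagree v hv x hx]; exact h0⟩
        refine le_trans (sInf_le ⟨φ, hφu, hcard, rfl⟩) ?_
        apply sSup_le
        rintro m' ⟨x, hxu, hxne, hmono, rfl⟩
        obtain ⟨v, hv, hvu, hxv⟩ := Aux.exists_child parent hxu hxne
        by_cases hx : x = v
        · subst hx
          have hgv : b = g x := by
            have h1 : φ x = Φ x x := hagree x ⟨hv, hvu⟩ x (Aux.anc_rfl parent x)
            have h2 : φ (parent x) = b := by rw [hv, hφu]
            rw [h2, h1, (hΦ x ⟨hv, hvu⟩).1] at hmono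
            exact hmono.symm
          refine le_trans ?_ (le_sSup ⟨x, hv, hvu, rfl⟩)
          rw [if_pos hgv]
          exact le_max_right _ _
        · have hmono' : Φ v x = Φ v (parent x) := by
            rw [← hagree v ⟨hv, hvu⟩ x hxv,
              ← hagree v ⟨hv, hvu⟩ (parent x) (Aux.anc_parent parent hxv hx)]
            exact hmono
          have h1 : (W x : EReal) ≤ maxMonoSub parent W v (Φ v) :=
            le_sSup ⟨x, hxv, hx, hmono', rfl⟩
          have h2 : maxMonoSub parent W v (Φ v) = dpD parent W v (g v) (qf v) :=
            (hΦ v ⟨hv, hvu⟩).2.2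
          refine le_trans ?_ (le_sSup ⟨v, hv, hvu, rfl⟩)
          refine le_trans ?_ (le_max_left _ _)
          rw [← h2]
          exact h1
      · push_neg at hall
        obtain ⟨v, hv, hempty⟩ := hall
        have hdp : dpD parent W v (g v) (qf v) = ⊤ := by
          unfold dpD
          rw [hempty, sInf_empty]
        refine le_trans le_top (le_sSup ⟨v, hv.1, hv.2, ?_⟩)
        rw [hdp, max_eq_left le_top]
    · -- RHS ≤ dpD
      apply le_sInf
      rintro m ⟨φ, hb, hq, rfl⟩
      refine le_trans (sInf_le ⟨φ,
        fun v => Nat.card {x : V // ancestorOf parent v x ∧ φ x = 0}, ?_, rfl⟩) ?_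
      · rw [Aux.finsum_children, ← hb, ← Aux.card_decomp parent hroot hreach u φ]
        exact hq
      · apply sSup_le
        rintro t ⟨v, hv, hvu, rfl⟩
        apply max_le
        · exact le_trans (sInf_le ⟨φ, rfl, rfl, rfl⟩)
            (Aux.maxMono_child_le parent hroot hreach W φ hv hvu)
        · split
          · next h => exact Aux.edge_le parent W φ hv hvu (by rw [hb, ← h])
          · exact bot_le
  · intro c
    have hancr : ∀ x : V, ancestorOf parent r x := hreach
    have hcards : ∀ φ : V → Fin 2, Nat.card {x : V // ancestorOf parent r x ∧ φ x = 0}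
        = Nat.card {x : V // φ x = 0} :=
      fun φ => Aux.card_congr' (fun x => ⟨fun h => h.2, fun h => ⟨hancr x, h⟩⟩)
    have hset : {m : EReal | ∃ φ : V → Fin 2,
        Nat.card {x : V // φ x = 0} = c ∧ m = maxMonoSub parent W r φ} =
      {m : EReal | ∃ φ : V → Fin 2, φ r = 0 ∧
        Nat.card {x : V // ancestorOf parent r x ∧ φ x = 0} = c ∧
        m = maxMonoSub parent W r φ} ∪
      {m : EReal | ∃ φ : V → Fin 2, φ r = 1 ∧
        Nat.card {x : V // ancestorOf parent r x ∧ φ x = 0} = c ∧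
        m = maxMonoSub parent W r φ} := by
      ext m
      constructor
      · rintro ⟨φ, hc, rfl⟩
        by_cases h0 : φ r = 0
        · exact Or.inl ⟨φ, h0, by rw [hcards φ]; exact hc, rfl⟩
        · exact Or.inr ⟨φ, by omega, by rw [hcards φ]; exact hc, rfl⟩
      · rintro (⟨φ, h0, hc, rfl⟩ | ⟨φ, h1, hc, rfl⟩) <;>
          exact ⟨φ, by rw [← hcards φ]; exact hc, rfl⟩
    rw [hset, sInf_union]
    rfl
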